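/- arXiv:2008.08289 — 3 statements merged into one kernel-verified Lean document; each statement's English description precedes it below -/
import Mathlib

section
/- Let y ∈ ℝⁿ, let Ω ⊆ {1,…,n}, and let η₁, η₂ > 0. The vector x* ∈ ℝⁿ defined coordinatewise by x*_i = y_i if |y_i| > √η (and x*_i = 0 otherwise), where η = η₁ for i ∈ Ω and η = η₁ + η₂ for i ∉ Ω, minimizes the objective F(x) = ‖y - x‖₂² + η₁‖x‖₀ + η₂‖x restricted to the complement of Ω‖₀, where ‖·‖₀ counts nonzero entries. -/
open scoped Classical

lemma pt_min (η y x : ℝ) (hη : 0 < η) :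
    (y - (if Real.sqrt η < |y| then y else 0)) ^ 2
      + (if (if Real.sqrt η < |y| then y else 0) ≠ 0 then η else 0)
    ≤ (y - x) ^ 2 + (if x ≠ 0 then η else 0) := by
  by_cases h : Real.sqrt η < |y|
  · have hy : y ≠ 0 := by
      intro h0
      rw [h0, abs_zero] at h
      exact absurd h (not_lt.mpr (Real.sqrt_nonneg η))
    simp only [if_pos h, sub_self, if_pos hy]
    by_cases hx : x ≠ 0
    · simp only [if_pos hx]
      nlinarith [sq_nonneg (y - x)]
    · push_neg at hx
      simp only [hx, if_neg (not_not.mpr rfl), sub_zero, add_zero]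
      have h2 : η < y ^ 2 := by
        have := Real.sq_sqrt hη.le
        nlinarith [abs_nonneg y, sq_abs y, Real.sqrt_nonneg η]
      nlinarith
  · push_neg at h
    have hy2 : y ^ 2 ≤ η := by
      have := Real.sq_sqrt hη.le
      nlinarith [sq_abs y, abs_nonneg y]
    rw [if_neg (not_lt.mpr h)]
    simp only [sub_zero, ne_eq, not_true_eq_false, if_false, add_zero]
    by_cases hx : x ≠ 0
    · simp only [if_pos hx]
      nlinarith [sq_nonneg (y - x)]
    · push_neg at hx
      simp [hx]

/-- Vector hard-thresholding (Lemma 1): coordinatewise hard-thresholding with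
threshold `√η₁` on coordinates in `Ω` and `√(η₁+η₂)` outside `Ω` minimizes
`‖y - x‖₂² + η₁‖x‖₀ + η₂‖x_{Ωᶜ}‖₀`. -/
theorem stmt_1 (n : ℕ) (y : Fin n → ℝ) (Ω : Finset (Fin n)) (η₁ η₂ : ℝ)
    (hη₁ : 0 < η₁) (hη₂ : 0 < η₂)
    (F : (Fin n → ℝ) → ℝ)
    (hF : ∀ x, F x = (∑ i, (y i - x i) ^ 2)
        + η₁ * (Finset.univ.filter (fun i => x i ≠ 0)).card
        + η₂ * (Finset.univ.filter (fun i => i ∉ Ω ∧ x i ≠ 0)).card)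
    (xstar : Fin n → ℝ)
    (hx : ∀ i, xstar i =
        if Real.sqrt (if i ∈ Ω then η₁ else η₁ + η₂) < |y i| then y i else 0) :
    ∀ x, F xstar ≤ F x := by
  intro x
  have key : ∀ (x : Fin n → ℝ), F x =
      ∑ i, ((y i - x i) ^ 2 + (if x i ≠ 0 then η₁ else 0)
        + (if i ∉ Ω ∧ x i ≠ 0 then η₂ else 0)) := by
    intro x
    rw [hF x]
    have h1 : η₁ * ((Finset.univ.filter (fun i => x i ≠ 0)).card : ℝ)
        = ∑ i, (if x i ≠ 0 then η₁ else 0) := by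
      rw [← Finset.sum_filter, Finset.sum_const, nsmul_eq_mul, mul_comm]
    have h2 : η₂ * ((Finset.univ.filter (fun i => i ∉ Ω ∧ x i ≠ 0)).card : ℝ)
        = ∑ i, (if i ∉ Ω ∧ x i ≠ 0 then η₂ else 0) := by
      rw [← Finset.sum_filter, Finset.sum_const, nsmul_eq_mul, mul_comm]
    rw [h1, h2, ← Finset.sum_add_distrib, ← Finset.sum_add_distrib]
  rw [key xstar, key x]
  apply Finset.sum_le_sum
  intro i _
  set η : ℝ := if i ∈ Ω then η₁ else η₁ + η₂ with hηdef
  have hηpos : 0 < η := by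
    by_cases hi : i ∈ Ω <;> simp [hηdef, hi] <;> linarith
  have combine : ∀ (z : ℝ),
      (if z ≠ 0 then η₁ else 0) + (if i ∉ Ω ∧ z ≠ 0 then η₂ else 0)
        = (if z ≠ 0 then η else 0) := by
    intro z
    by_cases hi : i ∈ Ω <;> by_cases hz : z ≠ 0 <;> simp [hηdef, hi, hz]
  have hxi : xstar i = if Real.sqrt η < |y i| then y i else 0 := hx i
  calc (y i - xstar i) ^ 2 + (if xstar i ≠ 0 then η₁ else 0)
        + (if i ∉ Ω ∧ xstar i ≠ 0 then η₂ else 0)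
      = (y i - xstar i) ^ 2 + (if xstar i ≠ 0 then η else 0) := by
        rw [add_assoc, combine]
    _ ≤ (y i - x i) ^ 2 + (if x i ≠ 0 then η else 0) := by
        rw [hxi]; exact pt_min η (y i) (x i) hηpos
    _ = (y i - x i) ^ 2 + (if x i ≠ 0 then η₁ else 0)
        + (if i ∉ Ω ∧ x i ≠ 0 then η₂ else 0) := by
        rw [add_assoc, combine]
end

section
/- For any η₁, η₂ > 0, index set Ω ⊆ Fin n, and y ∈ ℝⁿ, the minimum value of F(x) = ‖y - x‖₂² + η₁‖x‖₀ + η₂‖x_{Ωᶜ}‖₀ over x ∈ ℝⁿ equals Σ_{i ∈ Ω} min(y_i², η₁) + Σ_{i ∉ Ω} min(y_i², η₁ + η₂). -/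
open scoped Classical

/-- The minimum value of `‖y - x‖₂² + η₁‖x‖₀ + η₂‖x_{Ωᶜ}‖₀` over `x ∈ ℝⁿ`
equals `Σ_{i ∈ Ω} min(y_i², η₁) + Σ_{i ∉ Ω} min(y_i², η₁ + η₂)`. -/
theorem stmt_2 (n : ℕ) (y : Fin n → ℝ) (Ω : Finset (Fin n)) (η₁ η₂ : ℝ)
    (hη₁ : 0 < η₁) (hη₂ : 0 < η₂)
    (F : (Fin n → ℝ) → ℝ)
    (hF : ∀ x, F x = (∑ i, (y i - x i) ^ 2)
        + η₁ * (Finset.univ.filter (fun i => x i ≠ 0)).card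
        + η₂ * (Finset.univ.filter (fun i => i ∉ Ω ∧ x i ≠ 0)).card) :
    IsLeast (Set.range F)
      ((∑ i ∈ Ω, min ((y i) ^ 2) η₁)
        + ∑ i ∈ Ωᶜ, min ((y i) ^ 2) (η₁ + η₂)) := by
  set g : Fin n → ℝ := fun i => if i ∈ Ω then η₁ else η₁ + η₂ with hg
  have hRHS : (∑ i ∈ Ω, min ((y i) ^ 2) η₁) + ∑ i ∈ Ωᶜ, min ((y i) ^ 2) (η₁ + η₂)
      = ∑ i, min ((y i) ^ 2) (g i) := by
    rw [← Finset.sum_add_sum_compl Ω (fun i => min ((y i) ^ 2) (g i))]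
    congr 1
    · exact Finset.sum_congr rfl fun i hi => by simp [hg, hi]
    · exact Finset.sum_congr rfl fun i hi => by
        simp [hg, Finset.mem_compl.mp hi]
  have hFsum : ∀ x, F x = ∑ i, ((y i - x i) ^ 2
      + ((if x i ≠ 0 then η₁ else 0) + (if i ∉ Ω ∧ x i ≠ 0 then η₂ else 0))) := by
    intro x
    rw [hF, Finset.card_filter, Finset.card_filter]
    push_cast
    rw [Finset.mul_sum, Finset.mul_sum, Finset.sum_add_distrib,
      Finset.sum_add_distrib, ← add_assoc]
    congr 1
    · congr 1
      exact Finset.sum_congr rfl fun i _ => by split <;> simp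
    · exact Finset.sum_congr rfl fun i _ => by split <;> simp
  rw [hRHS]
  constructor
  · refine ⟨fun i => if (y i) ^ 2 ≤ g i then 0 else y i, ?_⟩
    rw [hFsum]
    refine Finset.sum_congr rfl fun i _ => ?_
    by_cases h : (y i) ^ 2 ≤ g i
    · simp [h, min_eq_left h]
    · have hy : y i ≠ 0 := by
        intro h0
        apply h
        rw [h0]
        simp [hg]
        split <;> positivity
      have := min_eq_right (le_of_not_ge h)
      simp only [h, if_false, hy, not_false_iff, if_true, sub_self, ne_eq]
      rw [this]
      by_cases hΩ : i ∈ Ω <;> simp [hg, hΩ]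
  · rintro v ⟨x, rfl⟩
    rw [hFsum]
    refine Finset.sum_le_sum fun i _ => ?_
    by_cases h0 : x i = 0
    · simp only [h0, ne_eq, not_true_eq_false, if_false, and_false, add_zero, sub_zero]
      exact min_le_left _ _
    · refine le_trans (min_le_right _ _) ?_
      have hsq : 0 ≤ (y i - x i) ^ 2 := sq_nonneg _
      by_cases hΩ : i ∈ Ω <;> simp [hg, hΩ, h0] <;> nlinarith [hη₂.le]
end

section
/- Consider an L-layer feedforward network with parameters (W^{(l)}, b^{(l)}) and a 1-Lipschitz activation σ applied entrywise, producing signals x^{(1)} = x, y^{(l)} = (W^{(l)})ᵀ x^{(l)} + b^{(l)}, x^{(l+1)} = σ(y^{(l)}). Suppose ‖W^{(l)}‖_F ≤ τ and ‖x^{(l)}‖₂ ≤ B for all l. Let Π^{(0)} = I and let Π^{(l)} be permutation matrices, and let the modified network have weights Ŵ^{(l)} with ‖Ŵ^{(l)} − Π^{(l−1)} W^{(l)} (Π^{(l)})ᵀ‖_F ≤ ε and biases b̂^{(l)} = Π^{(l)} b^{(l)}, producing signals x̂^{(l)} from the same input x. Then for every layer l, ‖Π^{(l)} x^{(l+1)}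 − x̂^{(l+1)}‖₂ ≤ (τ + ε)·‖Π^{(l−1)} x^{(l)} − x̂^{(l)}‖₂ + εB. -/
open Matrix

/-- Frobenius norm of a real matrix. -/
noncomputable def frob {m n : ℕ} (A : Matrix (Fin m) (Fin n) ℝ) : ℝ :=
  Real.sqrt (∑ i, ∑ j, (A i j) ^ 2)

/-- Euclidean (ℓ₂) norm of a vector. -/
noncomputable def l2 {n : ℕ} (v : Fin n → ℝ) : ℝ :=
  Real.sqrt (∑ i, (v i) ^ 2)

/-- The permutation matrix of `e`, with `(permMat e) i j = 1` iff `i = e j`. -/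
def permMat {n : ℕ} (e : Equiv.Perm (Fin n)) : Matrix (Fin n) (Fin n) ℝ :=
  fun i j => if i = e j then 1 else 0

lemma l2_eq_norm {n : ℕ} (v : Fin n → ℝ) :
    l2 v = ‖(WithLp.equiv 2 (Fin n → ℝ)).symm v‖ := by
  rw [EuclideanSpace.norm_eq]
  simp [l2, sq_abs]

lemma l2_nonneg {n : ℕ} (v : Fin n → ℝ) : 0 ≤ l2 v := Real.sqrt_nonneg _

lemma l2_add_le {n : ℕ} (u v : Fin n → ℝ) : l2 (u + v) ≤ l2 u + l2 v := by
  rw [l2_eq_norm, l2_eq_norm, l2_eq_norm]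
  exact norm_add_le _ _

lemma l2_neg {n : ℕ} (v : Fin n → ℝ) : l2 (-v) = l2 v := by
  simp [l2]

lemma l2_mono {n : ℕ} {u v : Fin n → ℝ} (h : ∀ i, |u i| ≤ |v i|) :
    l2 u ≤ l2 v := by
  apply Real.sqrt_le_sqrt
  apply Finset.sum_le_sum
  intro i _
  rw [← sq_abs (u i), ← sq_abs (v i)]
  exact pow_le_pow_left₀ (abs_nonneg _) (h i) 2

lemma permMat_mulVec {n : ℕ} (e : Equiv.Perm (Fin n)) (v : Fin n → ℝ) :
    (permMat e).mulVec v = fun i => v (e.symm i) := by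
  funext i
  simp only [permMat, Matrix.mulVec, dotProduct, ite_mul, one_mul, zero_mul]
  rw [Finset.sum_eq_single (e.symm i)]
  · simp
  · intro j _ hj; rw [if_neg]; intro h; exact hj (by simp [h])
  · simp

lemma l2_comp {n : ℕ} (e : Equiv.Perm (Fin n)) (v : Fin n → ℝ) :
    l2 (fun i => v (e i)) = l2 v := by
  unfold l2
  rw [Equiv.sum_comp e (fun i => v i ^ 2)]

lemma l2_permMat {n : ℕ} (e : Equiv.Perm (Fin n)) (v : Fin n → ℝ) :
    l2 ((permMat e).mulVec v) = l2 v := by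
  rw [permMat_mulVec]
  exact l2_comp e.symm v

lemma frob_nonneg {m n : ℕ} (A : Matrix (Fin m) (Fin n) ℝ) : 0 ≤ frob A :=
  Real.sqrt_nonneg _

lemma frob_transpose {m n : ℕ} (A : Matrix (Fin m) (Fin n) ℝ) :
    frob Aᵀ = frob A := by
  unfold frob
  rw [Finset.sum_comm]
  rfl

lemma l2_mulVec_le {m n : ℕ} (A : Matrix (Fin m) (Fin n) ℝ) (v : Fin n → ℝ) :
    l2 (A.mulVec v) ≤ frob A * l2 v := by
  unfold l2 frob
  rw [← Real.sqrt_mul (by positivity)]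
  apply Real.sqrt_le_sqrt
  rw [Finset.sum_mul]
  apply Finset.sum_le_sum
  intro i _
  calc (A.mulVec v i) ^ 2 = (∑ j, A i j * v j) ^ 2 := rfl
    _ ≤ (∑ j, (A i j) ^ 2) * (∑ j, (v j) ^ 2) :=
        Finset.sum_mul_sq_le_sq_mul_sq Finset.univ _ _

lemma permMat_transpose {n : ℕ} (e : Equiv.Perm (Fin n)) :
    (permMat e)ᵀ = permMat e.symm := by
  ext i j
  simp only [Matrix.transpose_apply, permMat]
  by_cases h : j = e i
  · rw [if_pos h, if_pos (by simp [h])]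
  · rw [if_neg h, if_neg (fun h2 => h (by simp [h2]))]

lemma permMat_inv_mulVec {n : ℕ} (e : Equiv.Perm (Fin n)) (v : Fin n → ℝ) :
    (permMat e)ᵀ.mulVec ((permMat e).mulVec v) = v := by
  rw [permMat_transpose, permMat_mulVec, permMat_mulVec]
  funext i
  simp

/-- Per-layer error bound for the RePurposed network. The original network has
signals `x (l+1) = σ((W l)ᵀ x l + b l)` started at `x 0`; the modified network
uses permutations `e l` (with `e 0 = id`), weights `Ŵ l` that are `ε`-close in
Frobenius norm to `Π^{(l)} · W l · (Π^{(l+1)})ᵀ`, and permuted biases. Then the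
permuted-signal deviation at layer `l+1` is at most `(τ+ε)` times the deviation
at layer `l` plus `εB`. -/
theorem stmt_10 (L : ℕ) (d : ℕ → ℕ)
    (σ : ℝ → ℝ) (hσ : ∀ u v : ℝ, |σ u - σ v| ≤ |u - v|)
    (W : ∀ l, Matrix (Fin (d l)) (Fin (d (l + 1))) ℝ)
    (b : ∀ l, Fin (d (l + 1)) → ℝ)
    (x : ∀ l, Fin (d l) → ℝ)
    (hx : ∀ l, x (l + 1) = fun i => σ (((W l)ᵀ.mulVec (x l) + b l) i))
    (τ B ε : ℝ) (hτ : 0 < τ) (hB : 0 < B) (hε : 0 ≤ ε)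
    (hWτ : ∀ l, l < L → frob (W l) ≤ τ)
    (hxB : ∀ l, l ≤ L → l2 (x l) ≤ B)
    (e : ∀ l, Equiv.Perm (Fin (d l)))
    (he0 : e 0 = Equiv.refl (Fin (d 0)))
    (Wh : ∀ l, Matrix (Fin (d l)) (Fin (d (l + 1))) ℝ)
    (hWh : ∀ l, l < L →
      frob (Wh l - permMat (e l) * W l * (permMat (e (l + 1)))ᵀ) ≤ ε)
    (bh : ∀ l, Fin (d (l + 1)) → ℝ)
    (hbh : ∀ l, bh l = (permMat (e (l + 1))).mulVec (b l))
    (xh : ∀ l, Fin (d l) → ℝ)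
    (hxh0 : xh 0 = x 0)
    (hxh : ∀ l, xh (l + 1) = fun i => σ (((Wh l)ᵀ.mulVec (xh l) + bh l) i)) :
    ∀ l, l < L →
      l2 ((permMat (e (l + 1))).mulVec (x (l + 1)) - xh (l + 1))
        ≤ (τ + ε) * l2 ((permMat (e l)).mulVec (x l) - xh l) + ε * B := by
  intro l hl
  set P0 := permMat (e l) with hP0
  set P1 := permMat (e (l + 1)) with hP1
  set y := (W l)ᵀ.mulVec (x l) + b l with hy
  set yh := (Wh l)ᵀ.mulVec (xh l) + bh l with hyh
  set u := P0.mulVec (x l) - xh l with hu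
  set Em := Wh l - P0 * W l * P1ᵀ with hEm
  -- Step A: Lipschitz step
  have stepA : l2 (P1.mulVec (x (l + 1)) - xh (l + 1)) ≤ l2 (P1.mulVec y - yh) := by
    apply l2_mono
    intro i
    have h1 : (P1.mulVec (x (l + 1)) - xh (l + 1)) i
        = σ (y ((e (l + 1)).symm i)) - σ (yh i) := by
      simp [hP1, permMat_mulVec, hx l, hxh l, hy, hyh]
    have h2 : (P1.mulVec y - yh) i = y ((e (l + 1)).symm i) - yh i := by
      simp [hP1, permMat_mulVec]
    rw [h1, h2]
    exact hσ _ _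
  -- Step B: biases cancel
  have stepB : P1.mulVec y - yh
      = P1.mulVec ((W l)ᵀ.mulVec (x l)) - (Wh l)ᵀ.mulVec (xh l) := by
    rw [hy, hyh, hbh l, Matrix.mulVec_add]
    abel
  -- Step C: decomposition
  have h1 : P0ᵀ.mulVec u = x l - P0ᵀ.mulVec (xh l) := by
    rw [hu, Matrix.mulVec_sub, hP0, permMat_inv_mulVec]
  have hWhT : (Wh l)ᵀ = Emᵀ + P1 * (W l)ᵀ * P0ᵀ := by
    have : Wh l = Em + P0 * W l * P1ᵀ := by rw [hEm]; abel
    rw [this, Matrix.transpose_add, Matrix.transpose_mul, Matrix.transpose_mul,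
      Matrix.transpose_transpose, Matrix.mul_assoc]
  have stepC : P1.mulVec ((W l)ᵀ.mulVec (x l)) - (Wh l)ᵀ.mulVec (xh l)
      = P1.mulVec ((W l)ᵀ.mulVec (P0ᵀ.mulVec u)) + (-(Emᵀ.mulVec (xh l))) := by
    rw [h1, Matrix.mulVec_sub, Matrix.mulVec_sub, hWhT, Matrix.add_mulVec,
      ← Matrix.mulVec_mulVec, ← Matrix.mulVec_mulVec]
    abel
  -- bounds
  have hA : l2 (P1.mulVec ((W l)ᵀ.mulVec (P0ᵀ.mulVec u))) ≤ τ * l2 u := by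
    rw [hP1, l2_permMat]
    calc l2 ((W l)ᵀ.mulVec (P0ᵀ.mulVec u))
        ≤ frob (W l)ᵀ * l2 (P0ᵀ.mulVec u) := l2_mulVec_le _ _
      _ = frob (W l) * l2 u := by
          rw [frob_transpose, hP0, permMat_transpose, l2_permMat]
      _ ≤ τ * l2 u := mul_le_mul_of_nonneg_right (hWτ l hl) (l2_nonneg u)
  have hxhl : l2 (xh l) ≤ B + l2 u := by
    have : xh l = P0.mulVec (x l) + (-u) := by rw [hu]; abel
    rw [this]
    calc l2 (P0.mulVec (x l) + (-u)) ≤ l2 (P0.mulVec (x l)) + l2 (-u) := l2_add_le _ _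
      _ = l2 (x l) + l2 u := by rw [hP0, l2_permMat, l2_neg]
      _ ≤ B + l2 u := by
          have := hxB l (le_of_lt hl)
          linarith
  have hBv : l2 (Emᵀ.mulVec (xh l)) ≤ ε * (B + l2 u) := by
    calc l2 (Emᵀ.mulVec (xh l)) ≤ frob Emᵀ * l2 (xh l) := l2_mulVec_le _ _
      _ = frob Em * l2 (xh l) := by rw [frob_transpose]
      _ ≤ ε * l2 (xh l) := mul_le_mul_of_nonneg_right (hWh l hl) (l2_nonneg _)
      _ ≤ ε * (B + l2 u) := mul_le_mul_of_nonneg_left hxhl hε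
  calc l2 (P1.mulVec (x (l + 1)) - xh (l + 1))
      ≤ l2 (P1.mulVec y - yh) := stepA
    _ = l2 (P1.mulVec ((W l)ᵀ.mulVec (P0ᵀ.mulVec u)) + (-(Emᵀ.mulVec (xh l)))) := by
        rw [stepB, stepC]
    _ ≤ l2 (P1.mulVec ((W l)ᵀ.mulVec (P0ᵀ.mulVec u))) + l2 (-(Emᵀ.mulVec (xh l))) :=
        l2_add_le _ _
    _ = l2 (P1.mulVec ((W l)ᵀ.mulVec (P0ᵀ.mulVec u))) + l2 (Emᵀ.mulVec (xh l)) := by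
        rw [l2_neg]
    _ ≤ τ * l2 u + ε * (B + l2 u) := add_le_add hA hBv
    _ = (τ + ε) * l2 u + ε * B := by ring
end
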